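/- Let G be a Hausdorff topological group, S a subset of G such that the topological closure of the subgroup generated by S is all of G, and e : G → G a continuous group endomorphism that is idempotent (e ∘ e = e). Then the kernel of e equals the smallest closed normal subgroup of G containing the set { e(s) * s⁻¹ : s ∈ S } (i.e., the topological closure of the normal closure of this set). -/

import Mathlib

/-- Kovács-style lemma (topological form): for a continuous idempotent endomorphism `e` of a
Hausdorff topological group `G` topologically generated by `S`, the kernel of `e` is the
smallest closed normal subgroup containing `{ e s * s⁻¹ | s ∈ S }`, i.e. the topological
closure of the normal closure of that set. -/
theorem kernel_eq_closedNormalClosure_of_idempotent {G : Type*} [Group G]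
    [TopologicalSpace G] [IsTopologicalGroup G] [T2Space G]
    (S : Set G) (hS : (Subgroup.closure S).topologicalClosure = ⊤)
    (e : G →* G) (hcont : Continuous e) (he : ∀ x : G, e (e x) = e x) :
    e.ker = (Subgroup.normalClosure ((fun s => e s * s⁻¹) '' S)).topologicalClosure := by
  set N := (Subgroup.normalClosure ((fun s => e s * s⁻¹) '' S)).topologicalClosure with hN
  have hNnormal : N.Normal := Subgroup.is_normal_topologicalClosure _
  have hNclosed : IsClosed (N : Set G) := Subgroup.isClosed_topologicalClosure _
  apply le_antisymm
  · -- ker ≤ N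
    let H : Subgroup G :=
      { carrier := {g | e g * g⁻¹ ∈ N}
        one_mem' := by simpa using one_mem N
        mul_mem' := by
          intro a b ha hb
          have key : e (a * b) * (a * b)⁻¹ = (e a * a⁻¹) * (a * (e b * b⁻¹) * a⁻¹) := by
            simp [mul_assoc]
          show e (a * b) * (a * b)⁻¹ ∈ N
          rw [key]
          exact mul_mem ha (hNnormal.conj_mem _ hb a)
        inv_mem' := by
          intro a ha
          have key : e a⁻¹ * (a⁻¹)⁻¹ = (a⁻¹ * (e a * a⁻¹) * a⁻¹⁻¹)⁻¹ := by
            simp [mul_assoc]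
          show e a⁻¹ * (a⁻¹)⁻¹ ∈ N
          rw [key]
          exact inv_mem (hNnormal.conj_mem _ ha a⁻¹) }
    have hHclosed : IsClosed (H : Set G) := by
      have : (H : Set G) = (fun g => e g * g⁻¹) ⁻¹' (N : Set G) := rfl
      rw [this]
      exact hNclosed.preimage (hcont.mul continuous_inv)
    have hSH : Subgroup.closure S ≤ H := by
      rw [Subgroup.closure_le]
      intro s hs
      show e s * s⁻¹ ∈ N
      exact Subgroup.le_topologicalClosure _
        (Subgroup.subset_normalClosure ⟨s, hs, rfl⟩)
    have htop : (⊤ : Subgroup G) ≤ H := by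
      rw [← hS]
      exact Subgroup.topologicalClosure_minimal _ hSH hHclosed
    intro x hx
    have hxH : e x * x⁻¹ ∈ N := htop (Subgroup.mem_top x)
    rw [MonoidHom.mem_ker] at hx
    rw [hx, one_mul] at hxH
    exact (inv_mem_iff).mp hxH
  · -- N ≤ ker
    apply Subgroup.topologicalClosure_minimal
    · apply Subgroup.normalClosure_le_normal
      rintro _ ⟨s, hs, rfl⟩
      simp [MonoidHom.mem_ker, he]
    · have : (e.ker : Set G) = e ⁻¹' {1} := rfl
      rw [this]
      exact isClosed_singleton.preimage hcont
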